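/- Let ε > 0 and β > 0. Then (1/β) ∑_{n∈ℤ} e^{i(2πn/β)t} / ((2πn/β)² + ε²) = (e^{−|t|ε} + e^{−(β−|t|)ε}) / (2ε(1 − e^{−βε})) for all t ∈ [−β/2, β/2]. -/

import Mathlib

open MeasureTheory Real

lemma exp_int_c (c : ℂ) (hc : c ≠ 0) (a b : ℝ) :
    ∫ x in a..b, Complex.exp (c*x) = (Complex.exp (c*b) - Complex.exp (c*a))/c :=
  integral_exp_mul_complex hc

lemma key_integral (ε β ω : ℝ) (hε : 0 < ε) (hβ : 0 < β)
    (hw2 : Complex.exp (Complex.I*ω*(β/2)) * Complex.exp (Complex.I*ω*(β/2)) = 1) :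
    ∫ x in (-(β/2))..(β/2), Complex.exp (-(Complex.I*ω*x)) *
        (Complex.exp (-(ε*|x|)) + Complex.exp (-(ε*(β-|x|))))
      = ((2*ε*(1 - Real.exp (-β*ε)) : ℝ) : ℂ) / ((ω:ℂ)^2+(ε:ℂ)^2) := by
  set c₁ : ℂ := -(ε:ℂ) - Complex.I*ω with hc₁def
  set c₂ : ℂ := (ε:ℂ) - Complex.I*ω with hc₂def
  have hc₁ : c₁ ≠ 0 := by
    intro h
    have : c₁.re = -ε := by simp [hc₁def]
    rw [h] at this; simp at this; linarith
  have hc₂ : c₂ ≠ 0 := by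
    intro h
    have : c₂.re = ε := by simp [hc₂def]
    rw [h] at this; simp at this; linarith
  have hcont : Continuous fun x : ℝ => Complex.exp (-(Complex.I*ω*x)) *
      (Complex.exp (-(ε*|x|)) + Complex.exp (-(ε*(β-|x|)))) := by
    fun_prop
  have hsplit := intervalIntegral.integral_add_adjacent_intervals (μ := volume)
    (a := -(β/2)) (b := 0) (c := β/2)
    (hcont.intervalIntegrable (-(β/2)) 0) (hcont.intervalIntegrable 0 (β/2))
  rw [← hsplit]
  have hleft : ∫ x in (-(β/2))..0, Complex.exp (-(Complex.I*ω*x)) *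
        (Complex.exp (-(ε*|x|)) + Complex.exp (-(ε*(β-|x|))))
      = ∫ x in (-(β/2))..0, (Complex.exp (c₂*x) + Complex.exp (-(ε:ℂ)*β) * Complex.exp (c₁*x)) := by
    apply intervalIntegral.integral_congr
    intro x hx
    rw [Set.uIcc_of_le (by linarith : -(β/2) ≤ (0:ℝ))] at hx
    have hax : |x| = -x := abs_of_nonpos hx.2
    simp only [hax, mul_add, ← Complex.exp_add]
    congr 2
    · rw [hc₂def]; push_cast; ring
    · rw [hc₁def]; push_cast; ring
  have hright : ∫ x in (0:ℝ)..(β/2), Complex.exp (-(Complex.I*ω*x)) *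
        (Complex.exp (-(ε*|x|)) + Complex.exp (-(ε*(β-|x|))))
      = ∫ x in (0:ℝ)..(β/2), (Complex.exp (c₁*x) + Complex.exp (-(ε:ℂ)*β) * Complex.exp (c₂*x)) := by
    apply intervalIntegral.integral_congr
    intro x hx
    rw [Set.uIcc_of_le (by linarith : (0:ℝ) ≤ β/2)] at hx
    have hax : |x| = x := abs_of_nonneg hx.1
    simp only [hax, mul_add, ← Complex.exp_add]
    congr 2
    · rw [hc₁def]; push_cast; ring
    · rw [hc₂def]; push_cast; ring
  rw [hleft, hright]
  have hint : ∀ (c : ℂ) (a b : ℝ), IntervalIntegrable (fun x : ℝ => Complex.exp (c*x)) volume a b :=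
    fun c a b => (by fun_prop : Continuous fun x : ℝ => Complex.exp (c*x)).intervalIntegrable _ _
  rw [intervalIntegral.integral_add (hint c₂ _ _) ((hint c₁ _ _).const_mul _),
      intervalIntegral.integral_add (hint c₁ _ _) ((hint c₂ _ _).const_mul _),
      intervalIntegral.integral_const_mul, intervalIntegral.integral_const_mul,
      exp_int_c c₁ hc₁, exp_int_c c₂ hc₂, exp_int_c c₁ hc₁, exp_int_c c₂ hc₂]
  simp only [Complex.ofReal_zero, mul_zero, Complex.exp_zero, Complex.ofReal_neg,
    Complex.ofReal_div, Complex.ofReal_ofNat]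
  -- now pure algebra
  set w : ℂ := Complex.exp (Complex.I*ω*(β/2)) with hwdef
  set a : ℂ := Complex.exp (-(ε:ℂ)*(β/2)) with hadef
  have ha : a ≠ 0 := Complex.exp_ne_zero _
  have hw0 : w ≠ 0 := Complex.exp_ne_zero _
  have hvw : Complex.exp (-(Complex.I*ω*(β/2))) = w := by
    have h1 : w * Complex.exp (-(Complex.I*ω*(β/2))) = 1 := by
      rw [hwdef, ← Complex.exp_add]; simp
    have := hw2.trans h1.symm
    exact (mul_left_cancel₀ (Complex.exp_ne_zero _) this).symm
  have e1 : Complex.exp (c₁*(β/2)) = a * w := by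
    rw [hadef, ← hvw, ← Complex.exp_add]; congr 1; rw [hc₁def]; ring
  have e4 : Complex.exp (c₂*(-(β/2))) = a * w := by
    rw [hadef, hwdef, ← Complex.exp_add]; congr 1; rw [hc₂def]; ring
  have e2 : Complex.exp (c₂*(β/2)) = w / a := by
    rw [eq_div_iff ha]
    rw [hadef, ← Complex.exp_add, ← hvw]; congr 1; rw [hc₂def]; ring
  have e3 : Complex.exp (c₁*(-(β/2))) = w / a := by
    rw [eq_div_iff ha]
    rw [hadef, hwdef, ← Complex.exp_add]; congr 1; rw [hc₁def]; ring
  have eE : Complex.exp (-(ε:ℂ)*β) = a*a := by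
    rw [hadef, ← Complex.exp_add]; congr 1; ring
  have eR : ((2*ε*(1 - Real.exp (-β*ε)) : ℝ) : ℂ) = 2*(ε:ℂ)*(1 - a*a) := by
    rw [← eE]
    have h5 : Complex.exp (-(ε:ℂ)*β) = ((Real.exp (-β*ε) : ℝ) : ℂ) := by
      rw [Complex.ofReal_exp]; congr 1; push_cast; ring
    rw [h5]; push_cast; ring
  have hden : (ω:ℂ)^2+(ε:ℂ)^2 ≠ 0 := by
    have : ((ω^2+ε^2 : ℝ) : ℂ) ≠ 0 := by
      rw [Complex.ofReal_ne_zero]; positivity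
    push_cast at this; exact this
  rw [e1, e2, e3, e4, eE, eR, hc₁def, hc₂def]
  have hc₁' : -(ε:ℂ) - Complex.I*ω ≠ 0 := by rw [← hc₁def]; exact hc₁
  have hc₂' : (ε:ℂ) - Complex.I*ω ≠ 0 := by rw [← hc₂def]; exact hc₂
  have hI : Complex.I^2 = -1 := Complex.I_sq
  field_simp
  linear_combination (2*a^2*(ε:ℂ)*(ω:ℂ)^2 - 2*(ε:ℂ)*(ω:ℂ)^2) * hI


set_option maxHeartbeats 1000000 in
/-- Matsubara summation identity for the β-periodic covariance kernel. -/
theorem stmt_1 (ε β : ℝ) (hε : 0 < ε) (hβ : 0 < β) (t : ℝ)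
    (ht : t ∈ Set.Icc (-(β/2)) (β/2)) :
    (1/β : ℂ) * ∑' n : ℤ, Complex.exp (Complex.I * (2*Real.pi*n/β) * t) /
        (((2*Real.pi*n/β : ℝ) : ℂ)^2 + (ε:ℂ)^2)
      = ((Real.exp (-(|t|)*ε) + Real.exp (-(β - |t|)*ε))
          / (2*ε*(1 - Real.exp (-β*ε))) : ℝ) := by
  haveI : Fact (0 < β) := ⟨hβ⟩
  have hβc : (β:ℂ) ≠ 0 := by exact_mod_cast hβ.ne'
  set F : ℝ → ℂ := fun x => Complex.exp (-(ε*|x|)) + Complex.exp (-(ε*(β-|x|))) with hFdef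
  have hFcont : Continuous F := by rw [hFdef]; fun_prop
  have hF2 : F (-(β/2)) = F (-(β/2) + β) := by
    rw [show -(β/2)+β = β/2 from by ring, hFdef]
    simp only [abs_neg]
  set f : C(AddCircle β, ℂ) :=
    ⟨AddCircle.liftIco β (-(β/2)) F, AddCircle.liftIco_continuous hF2 hFcont.continuousOn⟩
    with hfdef
  have hfC : ∀ x : ℝ, x ∈ Set.Ico (-(β/2)) (-(β/2)+β) → f ((x : ℝ) : AddCircle β) = F x := by
    intro x hx
    simp only [hfdef, ContinuousMap.coe_mk]
    exact AddCircle.liftIco_coe_apply hx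
  have hle : -(β/2) ≤ β/2 := by linarith
  have hKpos : 0 < 2*ε*(1 - Real.exp (-β*ε)) := by
    have : Real.exp (-β*ε) < 1 := Real.exp_lt_one_iff.mpr (by nlinarith)
    nlinarith
  -- Fourier coefficients of f
  have hcoeff : ∀ n : ℤ, fourierCoeff (⇑f) n
      = (1/β : ℂ) * (((2*ε*(1 - Real.exp (-β*ε)) : ℝ) : ℂ)
          / (((2*Real.pi*n/β : ℝ) : ℂ)^2 + (ε:ℂ)^2)) := by
    intro n
    have hw2 : Complex.exp (Complex.I*((2*Real.pi*n/β : ℝ):ℂ)*(β/2))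
        * Complex.exp (Complex.I*((2*Real.pi*n/β : ℝ):ℂ)*(β/2)) = 1 := by
      rw [← Complex.exp_add]
      have harg : Complex.I*((2*Real.pi*n/β : ℝ):ℂ)*((β:ℂ)/2)
          + Complex.I*((2*Real.pi*n/β : ℝ):ℂ)*((β:ℂ)/2) = (n:ℂ)*(2*(Real.pi:ℂ)*Complex.I) := by
        push_cast
        field_simp
        ring
      rw [harg, Complex.exp_int_mul_two_pi_mul_I]
    have hIc : (∫ x in (-(β/2))..(β/2), fourier (-n) (x : AddCircle β) • f x)
        = ∫ x in (-(β/2))..(β/2), Complex.exp (-(Complex.I*((2*Real.pi*n/β : ℝ):ℂ)*x)) *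
            (Complex.exp (-(ε*|x|)) + Complex.exp (-(ε*(β-|x|)))) := by
      simp_rw [intervalIntegral.integral_of_le hle]
      rw [integral_Ioc_eq_integral_Ioo, integral_Ioc_eq_integral_Ioo]
      refine setIntegral_congr_fun measurableSet_Ioo fun x hx => ?_
      have hxm : x ∈ Set.Ico (-(β/2)) (-(β/2) + β) := ⟨hx.1.le, by linarith [hx.2]⟩
      rw [hfC x hxm, fourier_coe_apply, smul_eq_mul]
      congr 2
      push_cast
      ring
    have := fourierCoeff_eq_intervalIntegral (⇑f) n (-(β/2))
    rw [show -(β/2) + β = β/2 by ring] at this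
    rw [this, hIc, key_integral ε β (2*Real.pi*n/β) hε hβ hw2]
    push_cast
    rw [Complex.real_smul]
    push_cast
    ring
  set K : ℝ := 2*ε*(1 - Real.exp (-β*ε)) with hKdef
  have hπ : (Real.pi : ℝ) ≠ 0 := Real.pi_ne_zero
  -- summability
  have hsumr : Summable (fun n : ℤ => 1/β * (K / ((2*Real.pi*n/β)^2 + ε^2))) := by
    apply Summable.of_norm_bounded_eventually (g := fun n : ℤ => (1/β*K*(β/(2*Real.pi))^2) * (1/(n:ℝ)^2))
      ((Real.summable_one_div_int_pow.mpr one_lt_two).mul_left _)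
    rw [Filter.eventually_cofinite]
    apply Set.Finite.subset (Set.finite_singleton (0:ℤ))
    intro n hn
    simp only [Set.mem_setOf_eq] at hn
    by_contra h0
    apply hn
    have hn0 : ((n:ℝ)) ≠ 0 := Int.cast_ne_zero.mpr (by simpa using h0)
    have hdenpos : (0:ℝ) < (2*Real.pi*n/β)^2 + ε^2 := by positivity
    rw [Real.norm_eq_abs, abs_of_nonneg (by positivity)]
    have e1 : K / ((2*Real.pi*n/β)^2) = K*(β/(2*Real.pi))^2*(1/(n:ℝ)^2) := by
      field_simp
    calc 1/β * (K / ((2*Real.pi*n/β)^2 + ε^2)) ≤ 1/β * (K / ((2*Real.pi*n/β)^2)) := by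
          have h9 : (0:ℝ) < (2*Real.pi*n/β)^2 := by positivity
          gcongr
          nlinarith
      _ = 1/β*K*(β/(2*Real.pi))^2 * (1/(n:ℝ)^2) := by rw [e1]; ring
  have hsum : Summable (fourierCoeff (⇑f)) := by
    have h1 : Summable (fun n : ℤ => (((1/β * (K / ((2*Real.pi*n/β)^2 + ε^2)) : ℝ)):ℂ)) :=
      Complex.summable_ofReal.mpr hsumr
    refine (summable_congr (fun n => ?_)).mpr h1
    rw [hcoeff n]
    push_cast
    ring
  -- pointwise convergence
  have hpt := has_pointwise_sum_fourier_series_of_summable hsum ((t : ℝ) : AddCircle β)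
  have heq : (fun n : ℤ => fourierCoeff (⇑f) n • fourier n ((t:ℝ) : AddCircle β))
      = fun n : ℤ => (((K:ℝ):ℂ)/(β:ℂ)) *
        (Complex.exp (Complex.I * (2*Real.pi*n/β) * t) / (((2*Real.pi*n/β : ℝ):ℂ)^2 + (ε:ℂ)^2)) := by
    funext n
    rw [hcoeff n, fourier_coe_apply, smul_eq_mul,
      show (2*(Real.pi:ℂ)*Complex.I*(n:ℂ)*(t:ℂ)/(β:ℂ)) = Complex.I * (2*(Real.pi:ℂ)*n/β) * t from by ring]
    push_cast
    ring
  have hft : f ((t:ℝ) : AddCircle β) = F t := by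
    rcases eq_or_lt_of_le ht.2 with h | h
    · have h2 : ((t : ℝ) : AddCircle β) = ((-(β/2) : ℝ) : AddCircle β) := by
        rw [show (t : ℝ) = -(β/2) + β from by rw [h]; ring, AddCircle.coe_add_period]
      rw [h2, hfC (-(β/2)) ⟨le_refl _, by linarith⟩, hFdef]
      simp only
      rw [show |(-(β/2):ℝ)| = |t| from by rw [← h, abs_neg]]
    · exact hfC t ⟨ht.1, by linarith⟩
  rw [heq, hft] at hpt
  have hc0 : (((K:ℝ):ℂ)/(β:ℂ)) ≠ 0 := by
    apply div_ne_zero _ hβc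
    exact_mod_cast hKpos.ne'
  have h3 := hpt.mul_left ((((K:ℝ):ℂ)/(β:ℂ))⁻¹)
  simp only [inv_mul_cancel_left₀ hc0] at h3
  rw [h3.tsum_eq]
  have hFt : F t = (((Real.exp (-(|t|)*ε) + Real.exp (-(β - |t|)*ε)) : ℝ) : ℂ) := by
    rw [hFdef]
    push_cast
    rw [show -((ε:ℂ)*(|t|:ℝ)) = -(|t|:ℝ)*(ε:ℂ) from by ring,
        show -((ε:ℂ)*((β:ℂ)-(|t|:ℝ))) = -((β:ℂ)-(|t|:ℝ))*(ε:ℂ) from by ring]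
  rw [hFt]
  have hKc : ((K:ℝ):ℂ) ≠ 0 := by exact_mod_cast hKpos.ne'
  push_cast
  field_simp
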